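/- Let x > 2 be a real number and let y > 1 satisfy y + 1/y = x. Then every Galois conjugate of x (other than x itself) has absolute value less than 2 and is real if and only if every Galois conjugate of y other than y and 1/y lies on the unit circle and 1/y is a conjugate of y. More precisely: x is a geometric Salem number if and only if y is a Salem number. -/

import Mathlib

open Polynomial
open IntermediateField

/-- A real algebraic integer `x` is a geometric Salem number if `x > 2` and all its
Galois conjugates other than `x` itself are real with absolute value less than `2`. -/
def IsGeometricSalem (x : ℝ) : Prop :=
  IsIntegral ℤ x ∧ 2 < x ∧
    ∀ z : ℂ, aeval z (minpoly ℚ x) = 0 → z ≠ (x : ℂ) →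
      z.im = 0 ∧ ‖z‖ < 2

/-- A Salem number is a real algebraic integer `y > 1` all of whose Galois conjugates
other than `y` have absolute value at most `1`, `1/y` is a conjugate, and all conjugates
other than `y` and `1/y` lie on the unit circle. -/
def IsSalem (y : ℝ) : Prop :=
  IsIntegral ℤ y ∧ 1 < y ∧
    (∀ z : ℂ, aeval z (minpoly ℚ y) = 0 → z ≠ (y : ℂ) → ‖z‖ ≤ 1) ∧
    aeval ((y : ℂ))⁻¹ (minpoly ℚ y) = 0 ∧
    ∀ z : ℂ, aeval z (minpoly ℚ y) = 0 → z ≠ (y : ℂ) → z ≠ ((y : ℂ))⁻¹ →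
      ‖z‖ = 1

lemma circle_lemma (r : ℝ) (hr : |r| < 2) (z : ℂ) (hz : z^2 - (r:ℂ)*z + 1 = 0) :
    ‖z‖ = 1 := by
  have him : z.im ≠ 0 := by
    intro h0
    have hre : (z.re:ℂ) = z := by
      rw [Complex.ext_iff]; simp [h0]
    rw [← hre] at hz
    have : z.re^2 - r*z.re + 1 = 0 := by exact_mod_cast hz
    nlinarith [abs_lt.mp hr, sq_nonneg (2*z.re - r)]
  have hconj : (starRingEnd ℂ) z ^ 2 - (r:ℂ) * (starRingEnd ℂ) z + 1 = 0 := by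
    have := congrArg (starRingEnd ℂ) hz
    simpa [map_sub, map_add, map_mul, map_pow, Complex.conj_ofReal] using this
  set zb := (starRingEnd ℂ) z with hzb
  have hne : z - zb ≠ 0 := by
    intro h
    apply him
    have : zb = z := by linear_combination -h
    exact (Complex.conj_eq_iff_im.mp this)
  have hsum : z + zb = (r:ℂ) := by
    have hfac : (z - zb) * (z + zb - (r:ℂ)) = 0 := by linear_combination hz - hconj
    rcases mul_eq_zero.mp hfac with h | h
    · exact absurd h hne
    · linear_combination h
  have hprod : z * zb = 1 := by
    have : zb = (r:ℂ) - z := by linear_combination hsum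
    rw [this]; linear_combination -hz
  have : (Complex.normSq z : ℂ) = 1 := by rw [← Complex.mul_conj]; exact hprod
  have hn : Complex.normSq z = 1 := by exact_mod_cast this
  have := Complex.sq_norm z
  nlinarith [norm_nonneg z]


lemma minpoly_complex (a : ℝ) : minpoly ℚ ((a:ℂ)) = minpoly ℚ a := by
  have := minpoly.algebraMap_eq (A := ℚ) (algebraMap ℝ ℂ).injective a
  simpa using this

lemma exists_embedding (a : ℝ) (ha : IsIntegral ℚ a) (z : ℂ)
    (hz : aeval z (minpoly ℚ a) = 0) :
    ∃ σ : ℚ⟮(a:ℂ)⟯ →ₐ[ℚ] ℂ, σ (AdjoinSimple.gen ℚ (a:ℂ)) = z := by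
  have ha' : IsIntegral ℚ ((a:ℂ)) := by
    have := ha.map (IsScalarTower.toAlgHom ℚ ℝ ℂ)
    simpa using this
  have hz' : z ∈ (minpoly ℚ ((a:ℂ))).aroots ℂ := by
    rw [mem_aroots]
    exact ⟨minpoly.ne_zero ha', by rw [minpoly_complex]; exact hz⟩
  refine ⟨(algHomAdjoinIntegralEquiv ℚ ha').symm ⟨z, hz'⟩, ?_⟩
  exact algHomAdjoinIntegralEquiv_symm_apply_gen ℚ ha' ⟨z, hz'⟩

lemma classify (x y : ℝ) (hy : 1 < y) (hxy : y + 1/y = x) (hyq : IsIntegral ℚ y)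
    (hconj : ∀ z : ℂ, aeval z (minpoly ℚ x) = 0 → z ≠ (x:ℂ) → z.im = 0 ∧ ‖z‖ < 2)
    (z : ℂ) (hz : aeval z (minpoly ℚ y) = 0) :
    z = (y:ℂ) ∨ z = ((y:ℂ))⁻¹ ∨ ‖z‖ = 1 := by
  have hy0 : (y:ℂ) ≠ 0 := by simp only [ne_eq, Complex.ofReal_eq_zero]; intro h; linarith
  obtain ⟨σ, hσ⟩ := exists_embedding y hyq z hz
  set g := AdjoinSimple.gen ℚ ((y:ℂ)) with hg
  have hgc : (algebraMap ℚ⟮(y:ℂ)⟯ ℂ) g = (y:ℂ) := AdjoinSimple.algebraMap_gen ℚ _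
  have hg0 : g ≠ 0 := by
    intro h; apply hy0; rw [← hgc, h, map_zero]
  set xL : ℚ⟮(y:ℂ)⟯ := g + g⁻¹ with hxL
  have hxLc : (algebraMap ℚ⟮(y:ℂ)⟯ ℂ) xL = (x:ℂ) := by
    rw [hxL, map_add, map_inv₀, hgc]
    have : (y:ℝ) + y⁻¹ = x := by rw [← hxy]; ring
    push_cast [← this]; ring
  have haux : aeval xL (minpoly ℚ x) = 0 := by
    apply (algebraMap ℚ⟮(y:ℂ)⟯ ℂ).injective
    rw [map_zero, ← aeval_algebraMap_apply, hxLc]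
    rw [show ((x:ℂ)) = algebraMap ℝ ℂ x from rfl, aeval_algebraMap_apply]
    rw [minpoly.aeval, map_zero]
  have hw : aeval (σ xL) (minpoly ℚ x) = 0 := by
    rw [aeval_algHom_apply, haux, map_zero]
  have hwz : σ xL = z + z⁻¹ := by
    rw [hxL, map_add, map_inv₀, hσ]
  have hz0 : z ≠ 0 := by
    intro h
    have hσ0 : σ g = σ 0 := by rw [map_zero, hσ]; exact h
    exact hg0 (σ.injective hσ0)
  by_cases hcase : σ xL = (x:ℂ)
  · -- z is root of z² - xz + 1
    have hq : z^2 - (x:ℂ)*z + 1 = 0 := by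
      have : z + z⁻¹ = (x:ℂ) := by rw [← hwz, hcase]
      field_simp at this
      linear_combination this
    have hxc : (y:ℂ) + ((y:ℂ))⁻¹ = (x:ℂ) := by
      have : (y:ℝ) + y⁻¹ = x := by rw [← hxy]; ring
      push_cast [← this]; ring
    have hfac : (z - y) * (z - ((y:ℂ))⁻¹) = 0 := by
      have h1 : (y:ℂ) * ((y:ℂ))⁻¹ = 1 := mul_inv_cancel₀ hy0
      calc (z - y) * (z - ((y:ℂ))⁻¹) = z^2 - ((y:ℂ) + ((y:ℂ))⁻¹)*z + (y:ℂ)*((y:ℂ))⁻¹ := by ring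
      _ = 0 := by rw [h1, hxc]; exact hq
    rcases mul_eq_zero.mp hfac with h | h
    · left; linear_combination h
    · right; left; linear_combination h
  · right; right
    obtain ⟨him, habs⟩ := hconj (σ xL) hw hcase
    set w := σ xL with hwdef
    have hwre : ((w.re : ℝ) : ℂ) = w := by
      rw [Complex.ext_iff]; simp [him]
    have habs' : |w.re| < 2 := by
      rw [← Real.norm_eq_abs, ← Complex.norm_real, hwre]; exact habs
    have hq : z^2 - ((w.re:ℝ):ℂ)*z + 1 = 0 := by
      rw [hwre]
      have : z + z⁻¹ = w := hwz.symm
      field_simp at this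
      linear_combination this
    exact circle_lemma w.re habs' z hq
lemma exists_lift (x y : ℝ) (hy : 1 < y) (hxy : y + 1/y = x)
    (hyq : IsIntegral ℚ y) (hxq : IsIntegral ℚ x) (w : ℂ)
    (hw : aeval w (minpoly ℚ x) = 0) :
    ∃ z : ℂ, z ≠ 0 ∧ aeval z (minpoly ℚ y) = 0 ∧ w = z + z⁻¹ := by
  obtain ⟨σ₀, hσ₀⟩ := exists_embedding x hxq w hw
  have hy0 : (y:ℂ) ≠ 0 := by
    simp only [ne_eq, Complex.ofReal_eq_zero]; intro h; linarith
  have hxc : (y:ℂ) + ((y:ℂ))⁻¹ = (x:ℂ) := by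
    have : (y:ℝ) + y⁻¹ = x := by rw [← hxy]; ring
    push_cast [← this]; ring
  have hyq' : IsIntegral ℚ ((y:ℂ)) := by
    have := hyq.map (IsScalarTower.toAlgHom ℚ ℝ ℂ)
    simpa using this
  have hyL : ((y:ℂ)) ∈ ℚ⟮(y:ℂ)⟯ := mem_adjoin_simple_self ℚ _
  have hxmem : ((x:ℂ)) ∈ ℚ⟮(y:ℂ)⟯ := by
    rw [← hxc]; exact add_mem hyL (inv_mem hyL)
  have hKL : ℚ⟮(x:ℂ)⟯ ≤ ℚ⟮(y:ℂ)⟯ := by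
    rw [adjoin_simple_le_iff]; exact hxmem
  have hK : ∀ s ∈ ({(y:ℂ)} : Set ℂ), IsIntegral ℚ s ∧ ((minpoly ℚ s).map (algebraMap ℚ ℂ)).Splits := by
    rintro s rfl
    exact ⟨hyq', IsAlgClosed.splits _⟩
  obtain ⟨φ, hφ⟩ := exists_algHom_adjoin_of_splits hK σ₀ hKL
  set g := AdjoinSimple.gen ℚ ((y:ℂ)) with hgdef
  have hgc : (algebraMap ℚ⟮(y:ℂ)⟯ ℂ) g = (y:ℂ) := AdjoinSimple.algebraMap_gen ℚ _
  refine ⟨φ g, ?_, ?_, ?_⟩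
  · intro h
    have hg0 : g ≠ 0 := fun hh => hy0 (by rw [← hgc, hh, map_zero])
    have : φ g = φ 0 := by rw [map_zero]; exact h
    exact hg0 (φ.injective this)
  · have hgen : aeval g (minpoly ℚ y) = 0 := by
      rw [← minpoly_complex y]
      exact aeval_gen_minpoly ℚ _
    rw [aeval_algHom_apply, hgen, map_zero]
  · set xK := AdjoinSimple.gen ℚ ((x:ℂ)) with hxKdef
    have hmap : inclusion hKL xK = g + g⁻¹ := by
      apply Subtype.ext
      have h1 : ((inclusion hKL xK : ℚ⟮(y:ℂ)⟯) : ℂ) = (x:ℂ) := by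
        rw [coe_inclusion]
        exact AdjoinSimple.algebraMap_gen ℚ _
      rw [h1]
      push_cast
      rw [AdjoinSimple.coe_gen]
      exact hxc.symm
    have h2 : φ (g + g⁻¹) = w := by
      rw [← hmap]
      have := DFunLike.congr_fun hφ xK
      simp only [AlgHom.comp_apply] at this
      rw [this]
      exact hσ₀
    rw [← h2, map_add, map_inv₀]
set_option synthInstance.maxHeartbeats 800000 in
set_option maxHeartbeats 1600000 in
lemma int_y (x y : ℝ) (hy : 1 < y) (hxy : y + 1/y = x) (hxi : IsIntegral ℤ x) :
    IsIntegral ℤ y := by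
  have hy0 : y ≠ 0 := by linarith
  set A := Algebra.adjoin ℤ ({x} : Set ℝ) with hA
  haveI : Algebra.IsIntegral ℤ A := Algebra.IsIntegral.adjoin (by
    rintro t ht
    rw [Set.mem_singleton_iff] at ht
    rw [ht]; exact hxi)
  have hxA : x ∈ A := Algebra.self_mem_adjoin_singleton ℤ x
  have hyA : IsIntegral A y := by
    refine ⟨X^2 - C (⟨x, hxA⟩ : A) * X + C 1, ?_, ?_⟩
    · have h1 : (X^2 - C (⟨x, hxA⟩ : A) * X + C 1 : A[X]) =
          X^2 + (C (-(⟨x, hxA⟩ : A)) * X + C 1) := by rw [Polynomial.C_neg]; ring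
      rw [h1]
      apply monic_X_pow_add
      apply lt_of_le_of_lt (degree_add_le _ _)
      rw [max_lt_iff]
      constructor
      · calc degree (C (-(⟨x, hxA⟩ : A)) * X) ≤ degree (C (-(⟨x, hxA⟩ : A))) + degree X :=
              degree_mul_le _ _
          _ ≤ 0 + 1 := add_le_add degree_C_le degree_X_le
          _ < 2 := by decide
      · exact lt_of_le_of_lt degree_C_le (by decide)
    · have h2 : y^2 - x*y + 1 = 0 := by
        field_simp at hxy
        nlinarith [hxy]
      have hax : algebraMap A ℝ (⟨x, hxA⟩ : A) = x := rfl
      have h3 : aeval y (X^2 - C (⟨x, hxA⟩ : A) * X + C 1) = 0 := by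
        simp only [map_add, map_sub, map_mul, map_pow, map_one, aeval_X, aeval_C, hax]
        linarith [h2]
      rw [aeval_def] at h3
      exact h3
  exact isIntegral_trans y hyA
lemma int_x (x y : ℝ) (hy : 1 < y) (hxy : y + 1/y = x) (hyi : IsIntegral ℤ y)
    (hinv : aeval ((y:ℂ))⁻¹ (minpoly ℚ y) = 0) : IsIntegral ℤ x := by
  have hy0 : y ≠ 0 := by linarith
  have hinvR : aeval (y⁻¹ : ℝ) (minpoly ℚ y) = 0 := by
    have h1 : ((y⁻¹:ℝ):ℂ) = ((y:ℂ))⁻¹ := by push_cast; rfl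
    apply (algebraMap ℝ ℂ).injective
    rw [map_zero, ← aeval_algebraMap_apply]
    show aeval ((y⁻¹:ℝ):ℂ) (minpoly ℚ y) = 0
    rw [h1]; exact hinv
  have key : minpoly ℚ y = (minpoly ℤ y).map (algebraMap ℤ ℚ) :=
    minpoly.isIntegrallyClosed_eq_field_fractions' ℚ hyi
  have hint : IsIntegral ℤ (y⁻¹ : ℝ) := by
    refine ⟨minpoly ℤ y, minpoly.monic hyi, ?_⟩
    have : aeval (y⁻¹:ℝ) (minpoly ℤ y) = 0 := by
      rw [key, aeval_map_algebraMap] at hinvR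
      exact hinvR
    rw [aeval_def] at this
    exact this
  have hxe : x = y + y⁻¹ := by rw [← hxy]; ring
  rw [hxe]
  exact hyi.add hint

lemma rat_of_int (a : ℝ) (ha : IsIntegral ℤ a) (c : ℚ) (hc : (c:ℝ) = a) :
    ∃ n : ℤ, (n:ℚ) = c := by
  have h1 : IsIntegral ℤ c := by
    rw [← isIntegral_algebraMap_iff (algebraMap ℚ ℝ).injective]
    show IsIntegral ℤ ((c:ℝ))
    rw [hc]; exact ha
  exact IsIntegrallyClosed.isIntegral_iff.mp h1

lemma inv_root (x y : ℝ) (hy : 1 < y) (hxy : y + 1/y = x)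
    (hxi : IsIntegral ℤ x) (hyi : IsIntegral ℤ y)
    (hclass : ∀ z : ℂ, aeval z (minpoly ℚ y) = 0 →
      z = (y:ℂ) ∨ z = ((y:ℂ))⁻¹ ∨ ‖z‖ = 1) :
    aeval ((y:ℂ))⁻¹ (minpoly ℚ y) = 0 := by
  by_contra hne
  set m := minpoly ℚ y with hm
  set p := m.map (algebraMap ℚ ℂ) with hp
  have hyq : IsIntegral ℚ y := hyi.tower_top
  have hm0 : m ≠ 0 := minpoly.ne_zero hyq
  have hmonic : p.Monic := (minpoly.monic hyq).map _
  have hsplits : p.Splits :=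
    IsAlgClosed.splits p
  have hprodp : p = (p.roots.map fun r => X - C r).prod :=
    hsplits.eq_prod_roots_of_monic hmonic
  have hroot_mem : ∀ r ∈ p.roots, aeval r m = 0 := by
    intro r hr
    have h := (mem_roots (hmonic.ne_zero)).mp hr
    rw [aeval_def, eval₂_eq_eval_map]
    exact h
  have hay : aeval ((y:ℂ)) m = 0 := by
    rw [show ((y:ℂ)) = algebraMap ℝ ℂ y from rfl, aeval_algebraMap_apply, hm, minpoly.aeval,
      map_zero]
  have hymem : (y:ℂ) ∈ p.roots := by
    rw [mem_roots hmonic.ne_zero]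
    rw [IsRoot, ← eval₂_eq_eval_map, ← aeval_def]
    exact hay
  have hnodup : p.roots.Nodup := nodup_roots ((minpoly.irreducible hyq).separable.map)
  have habs : ‖p.eval 0‖ = (p.roots.map (fun r => ‖r‖)).prod := by
    conv_lhs => rw [hprodp]
    rw [eval_multiset_prod, Multiset.map_map, ← normHom_apply, map_multiset_prod, Multiset.map_map]
    apply congrArg
    apply Multiset.map_congr rfl
    intro r _
    simp [Function.comp]
  obtain ⟨t, ht⟩ : ∃ t, p.roots = (y:ℂ) ::ₘ t := ⟨_, (Multiset.cons_erase hymem).symm⟩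
  have hynott : (y:ℂ) ∉ t := by
    rw [ht] at hnodup
    exact (Multiset.nodup_cons.mp hnodup).1
  have habs1 : ∀ r ∈ t, ‖r‖ = 1 := by
    intro r hr
    have hrr : r ∈ p.roots := ht ▸ Multiset.mem_cons_of_mem hr
    rcases hclass r (hroot_mem r hrr) with h | h | h
    · exact absurd (h ▸ hr) hynott
    · exact absurd (h ▸ hroot_mem r hrr) hne
    · exact h
  have hprodval : (p.roots.map (fun r => ‖r‖)).prod = y := by
    rw [ht, Multiset.map_cons, Multiset.prod_cons]
    have : (t.map fun r => ‖r‖).prod = 1 := by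
      apply Multiset.prod_eq_one
      intro a ha
      obtain ⟨r, hr, rfl⟩ := Multiset.mem_map.mp ha
      exact habs1 r hr
    rw [this, Complex.norm_real, Real.norm_eq_abs, mul_one, abs_of_pos (by linarith)]
  have heval0 : p.eval 0 = algebraMap ℚ ℂ (m.coeff 0) := by
    rw [hp, eval_map, eval₂_at_zero]
  set c := m.coeff 0 with hc
  have hyc : ((|c| : ℚ) : ℝ) = y := by
    have h1 : ‖p.eval 0‖ = y := by rw [habs, hprodval]
    rw [heval0] at h1
    have h2 : algebraMap ℚ ℂ c = ((c:ℝ):ℂ) := by push_cast; rfl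
    rw [h2, Complex.norm_real, Real.norm_eq_abs] at h1
    rw [← h1]
    push_cast
    rfl
  obtain ⟨n, hn⟩ := rat_of_int y hyi |c| hyc
  have hny : ((n:ℝ)) = y := by
    rw [← hyc, ← hn]; push_cast; rfl
  have hn1 : 1 < (n:ℝ) := by rw [hny]; exact hy
  have hn2_aux : (1:ℤ) < n := by exact_mod_cast hn1
  have hn2 : 2 ≤ n := by omega
  have hn0 : (n:ℝ) ≠ 0 := by
    intro h
    rw [h] at hn1
    linarith
  have hxq : ((n + (n:ℚ)⁻¹ : ℚ) : ℝ) = x := by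
    rw [← hxy, ← hny]
    push_cast
    field_simp
  obtain ⟨k, hk⟩ := rat_of_int x hxi _ hxq
  have hinvq : ((k - n : ℤ) : ℚ) = (n:ℚ)⁻¹ := by
    push_cast
    linear_combination hk
  have hnn : (1:ℚ) < (n:ℚ) := by exact_mod_cast hn2_aux
  have hnq : (0:ℚ) < (n:ℚ)⁻¹ := inv_pos.mpr (by linarith)
  have hnq2 : (n:ℚ)⁻¹ < 1 := by
    rw [inv_lt_one_iff₀]
    right
    linarith
  rw [← hinvq] at hnq hnq2
  have h5 : (0:ℤ) < k - n := by exact_mod_cast hnq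
  have h6 : (k - n : ℤ) < 1 := by exact_mod_cast hnq2
  omega
-- rational root of minpoly means the element is rational
lemma rat_root_aux (y : ℝ) (hyq : IsIntegral ℚ y) (r : ℚ)
    (h : aeval ((r:ℂ)) (minpoly ℚ y) = 0) : y = (r:ℝ) := by
  have h1 : aeval r (minpoly ℚ y) = 0 := by
    apply (algebraMap ℚ ℂ).injective
    rw [map_zero, ← aeval_algebraMap_apply]
    have : algebraMap ℚ ℂ r = (r:ℂ) := by push_cast; rfl
    rw [this]
    exact h
  have hdvd : (X - C r) ∣ minpoly ℚ y := dvd_iff_isRoot.mpr (by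
    rw [IsRoot.def]
    simpa [aeval_def] using h1)
  have hassoc : Associated (X - C r) (minpoly ℚ y) :=
    (irreducible_X_sub_C r).associated_of_dvd (minpoly.irreducible hyq) hdvd
  have heq : X - C r = minpoly ℚ y :=
    eq_of_monic_of_associated (monic_X_sub_C r) (minpoly.monic hyq) hassoc
  have := minpoly.aeval ℚ y
  rw [← heq] at this
  simp only [map_sub, aeval_X, aeval_C] at this
  have : y - (algebraMap ℚ ℝ r) = 0 := this
  have hr : algebraMap ℚ ℝ r = (r:ℝ) := by push_cast; rfl
  rw [hr] at this
  linarith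

theorem geometricSalem_iff_salem (x y : ℝ) (hx : 2 < x) (hy : 1 < y)
    (hxy : y + 1 / y = x) : IsGeometricSalem x ↔ IsSalem y := by
  have hy0 : y ≠ 0 := by linarith
  have hyc0 : (y:ℂ) ≠ 0 := by
    simp only [ne_eq, Complex.ofReal_eq_zero]; exact hy0
  have hxc : (y:ℂ) + ((y:ℂ))⁻¹ = (x:ℂ) := by
    have h : (y:ℝ) + y⁻¹ = x := by rw [← hxy]; ring
    push_cast [← h]; ring
  constructor
  · rintro ⟨hxi, hx2, hconj⟩
    have hyi : IsIntegral ℤ y := int_y x y hy hxy hxi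
    have hyq : IsIntegral ℚ y := hyi.tower_top
    have hclass : ∀ z : ℂ, aeval z (minpoly ℚ y) = 0 →
        z = (y:ℂ) ∨ z = ((y:ℂ))⁻¹ ∨ ‖z‖ = 1 :=
      fun z hz => classify x y hy hxy hyq hconj z hz
    refine ⟨hyi, hy, ?_, ?_, ?_⟩
    · intro z hz hzy
      rcases hclass z hz with h | h | h
      · exact absurd h hzy
      · rw [h, norm_inv, Complex.norm_real, Real.norm_eq_abs, abs_of_pos (by linarith)]
        rw [inv_le_one_iff₀]
        right; linarith
      · linarith [h.le]
    · exact inv_root x y hy hxy hxi hyi hclass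
    · intro z hz hzy hzinv
      rcases hclass z hz with h | h | h
      · exact absurd h hzy
      · exact absurd h hzinv
      · exact h
  · rintro ⟨hyi, _, hle, hinv, hcirc⟩
    have hxi : IsIntegral ℤ x := int_x x y hy hxy hyi hinv
    have hyq : IsIntegral ℚ y := hyi.tower_top
    have hxq : IsIntegral ℚ x := hxi.tower_top
    refine ⟨hxi, hx, ?_⟩
    intro w hw hwx
    obtain ⟨z, hz0, hzm, hwz⟩ := exists_lift x y hy hxy hyq hxq w hw
    have hzy : z ≠ (y:ℂ) := by
      intro h
      apply hwx
      rw [hwz, h, hxc]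
    have hzinv : z ≠ ((y:ℂ))⁻¹ := by
      intro h
      apply hwx
      rw [hwz, h, inv_inv, ← hxc]; ring
    have habs : ‖z‖ = 1 := hcirc z hzm hzy hzinv
    have hnorm : z.re^2 + z.im^2 = 1 := by
      have h1 := Complex.sq_norm z
      rw [habs] at h1
      have h2 : Complex.normSq z = z.re*z.re + z.im*z.im := Complex.normSq_apply z
      nlinarith [h1, h2]
    have hconjz : (starRingEnd ℂ) z = z⁻¹ := by
      apply eq_inv_of_mul_eq_one_left
      rw [mul_comm, Complex.mul_conj]
      rw [← Complex.sq_norm, habs]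
      norm_num
    have hwre : w = ((2 * z.re : ℝ) : ℂ) := by
      rw [hwz, ← hconjz, Complex.add_conj]
    have hrelt : |z.re| < 1 := by
      rcases lt_or_ge |z.re| 1 with h | h
      · exact h
      · exfalso
        have him : z.im = 0 := by nlinarith [abs_nonneg z.re, sq_abs z.re]
        have hre : z.re = 1 ∨ z.re = -1 := by
          have h1 : z.re^2 = 1 := by nlinarith [sq_abs z.re]
          rcases mul_self_eq_one_iff.mp (by nlinarith : z.re * z.re = 1) with h2 | h2
          · exact Or.inl h2
          · exact Or.inr h2
        rcases hre with h2 | h2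
        · have hz1 : z = ((1:ℚ):ℂ) := by
            rw [Complex.ext_iff]
            constructor
            · simpa using h2
            · simpa using him
          have := rat_root_aux y hyq 1 (by rw [← hz1]; exact hzm)
          simp at this
          linarith
        · have hz1 : z = ((-1:ℚ):ℂ) := by
            rw [Complex.ext_iff]
            constructor
            · simpa using h2
            · simpa using him
          have := rat_root_aux y hyq (-1) (by rw [← hz1]; exact hzm)
          simp at this
          linarith
    constructor
    · rw [hwre]; exact Complex.ofReal_im _
    · rw [hwre, Complex.norm_real, Real.norm_eq_abs, abs_mul]
      simp only [abs_two]
      nlinarith [hrelt]
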